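/- Let n ≥ 1 and let x, y : {0,1}^n → {0,2}. Consider the (n+2)-player game in which players 1,…,n each choose an action in {0,1} and players n+1 and n+2 each choose an action in {1,2}; writing a ∈ {0,1}^n for the profile of the first n players and (r,s) for the actions of players n+1 and n+2, the utilities are: u_i(a,r,s) = a_i for each i ∈ {1,…,n}; u_{n+1}(a,r,s) = 2 if (r,s)=(1,1), 1 if (r,s)=(1,2), 1 if (r,s)=(2,1), x_a if (r,s)=(2,2); and u_{n+2}(a,r,s) = 1 if (r,s)=(1,1), 2 if (r,s)=(1,2), y_a if (r,s)=(2,1), 1 if (r,s)=(2,2). Then this game has a better-reply cycle if and only if there exists a ∈ {0,1}^n with x_a = 2 and y_a = 2. -/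

import Mathlib

set_option linter.unnecessarySeqFocus false
set_option linter.unusedVariables false


/-- The game with players `P`, action sets `C p`, and utilities `u` has a better-reply
cycle: a sequence of profiles `a 0, a 1, …, a K` with `K ≥ 1` and `a K = a 0`, each
obtained from the previous one by changing the action of exactly one player, whose
utility strictly increases. -/
def HasBetterReplyCycle {P : Type*} {C : P → Type*}
    (u : ∀ _ : P, (∀ q, C q) → ℝ) : Prop :=
  ∃ (K : ℕ) (a : ℕ → ∀ q, C q), 1 ≤ K ∧ a K = a 0 ∧
    ∀ t < K, ∃ p : P, a (t + 1) p ≠ a t p ∧ (∀ q, q ≠ p → a (t + 1) q = a t q) ∧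
      u p (a t) < u p (a (t + 1))

/-- Action sets: players `Sum.inl i` (for `i ∈ {1,…,n}`) choose in `{0,1}` (`Bool`);
players `Sum.inr 0` (player `n+1`) and `Sum.inr 1` (player `n+2`) choose in `{1,2}`
(encoded as `Fin 2`, with `0` standing for action `1` and `1` for action `2`). -/
abbrev Act15 (n : ℕ) : Fin n ⊕ Fin 2 → Type
  | Sum.inl _ => Bool
  | Sum.inr _ => Fin 2

/-- Payoff of player `n+1`: `2` at `(1,1)`, `1` at `(1,2)` and `(2,1)`, `x_a` at `(2,2)`
(here `(r,s) = (0,0)` encodes `(1,1)`, etc.). -/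
noncomputable def gadgetA (r s : Fin 2) (x : ℝ) : ℝ :=
  if r = 0 ∧ s = 0 then 2 else if r = 0 ∧ s = 1 then 1
  else if r = 1 ∧ s = 0 then 1 else x

/-- Payoff of player `n+2`: `1` at `(1,1)`, `2` at `(1,2)`, `y_a` at `(2,1)`, `1` at
`(2,2)`. -/
noncomputable def gadgetB (r s : Fin 2) (y : ℝ) : ℝ :=
  if r = 0 ∧ s = 0 then 1 else if r = 0 ∧ s = 1 then 2
  else if r = 1 ∧ s = 0 then y else 1

/-- The `(n+2)`-player game: `u_i(a,r,s) = a_i` for `i ∈ {1,…,n}`, and players `n+1`,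
`n+2` play the `2×2` gadget with parameters `x_a`, `y_a`. -/
noncomputable def game15 {n : ℕ} (x y : (Fin n → Bool) → ℝ) :
    ∀ _ : Fin n ⊕ Fin 2, (∀ q, Act15 n q) → ℝ :=
  fun p σ =>
    match p with
    | Sum.inl i => if σ (Sum.inl i) then 1 else 0
    | Sum.inr j =>
      if j = 0 then
        gadgetA (σ (Sum.inr 0)) (σ (Sum.inr 1)) (x (fun i => σ (Sum.inl i)))
      else
        gadgetB (σ (Sum.inr 0)) (σ (Sum.inr 1)) (y (fun i => σ (Sum.inl i)))

/-! ### Auxiliary machinery -/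

instance Act15.decEq (n : ℕ) (p : Fin n ⊕ Fin 2) : DecidableEq (Act15 n p) := by
  cases p <;> exact inferInstance

lemma fin2cases (v : Fin 2) : v = 0 ∨ v = 1 := by omega

lemma game15_inl {n : ℕ} (x y : (Fin n → Bool) → ℝ) (i : Fin n) (σ : ∀ q, Act15 n q) :
    game15 x y (Sum.inl i) σ = if σ (Sum.inl i) then 1 else 0 := rfl

lemma game15_inr0 {n : ℕ} (x y : (Fin n → Bool) → ℝ) (σ : ∀ q, Act15 n q) :
    game15 x y (Sum.inr 0) σ
      = gadgetA (σ (Sum.inr 0)) (σ (Sum.inr 1)) (x (fun i => σ (Sum.inl i))) := by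
  simp [game15]

lemma game15_inr1 {n : ℕ} (x y : (Fin n → Bool) → ℝ) (σ : ∀ q, Act15 n q) :
    game15 x y (Sum.inr 1) σ
      = gadgetB (σ (Sum.inr 0)) (σ (Sum.inr 1)) (y (fun i => σ (Sum.inl i))) := by
  simp [game15]

lemma gadgetA_dir (x : ℝ) (hx : x = 0 ∨ x = 2) {r r' s : Fin 2}
    (h : gadgetA r s x < gadgetA r' s x) :
    (s = 0 ∧ r = 1 ∧ r' = 0) ∨
      (s = 1 ∧ r = (if x = 2 then 0 else 1) ∧ r' = (if x = 2 then 1 else 0)) := by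
  rcases hx with hx | hx <;> subst hx <;> fin_cases r <;> fin_cases r' <;> fin_cases s <;>
    simp_all [gadgetA] <;> norm_num at *

lemma gadgetB_dir (y : ℝ) (hy : y = 0 ∨ y = 2) {r s s' : Fin 2}
    (h : gadgetB r s y < gadgetB r s' y) :
    (r = 0 ∧ s = 0 ∧ s' = 1) ∨
      (r = 1 ∧ s = (if y = 2 then 1 else 0) ∧ s' = (if y = 2 then 0 else 1)) := by
  rcases hy with hy | hy <;> subst hy <;> fin_cases r <;> fin_cases s <;> fin_cases s' <;>
    simp_all [gadgetB] <;> norm_num at *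

lemma gadgetA00 (x : ℝ) : gadgetA 0 0 x = 2 := by
  rw [gadgetA, if_pos (by decide)]
lemma gadgetA01 (x : ℝ) : gadgetA 0 1 x = 1 := by
  rw [gadgetA, if_neg (by decide), if_pos (by decide)]
lemma gadgetA10 (x : ℝ) : gadgetA 1 0 x = 1 := by
  rw [gadgetA, if_neg (by decide), if_neg (by decide), if_pos (by decide)]
lemma gadgetA11 (x : ℝ) : gadgetA 1 1 x = x := by
  rw [gadgetA, if_neg (by decide), if_neg (by decide), if_neg (by decide)]
lemma gadgetB00 (y : ℝ) : gadgetB 0 0 y = 1 := by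
  rw [gadgetB, if_pos (by decide)]
lemma gadgetB01 (y : ℝ) : gadgetB 0 1 y = 2 := by
  rw [gadgetB, if_neg (by decide), if_pos (by decide)]
lemma gadgetB10 (y : ℝ) : gadgetB 1 0 y = y := by
  rw [gadgetB, if_neg (by decide), if_neg (by decide), if_pos (by decide)]
lemma gadgetB11 (y : ℝ) : gadgetB 1 1 y = 1 := by
  rw [gadgetB, if_neg (by decide), if_neg (by decide), if_neg (by decide)]

lemma monoBetween {m : ℕ → ℕ} {K : ℕ} (hstep : ∀ t < K, m t ≤ m (t+1)) :
    ∀ s ≤ K, ∀ t ≤ s, m t ≤ m s := by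
  intro s hs
  induction s with
  | zero => intro t ht; interval_cases t; exact le_rfl
  | succ k ih =>
    intro t ht
    rcases Nat.lt_or_ge t (k+1) with h | h
    · exact le_trans (ih (by omega) t (by omega)) (hstep k (by omega))
    · have : t = k + 1 := by omega
      subst this; exact le_rfl

lemma cycleNoMove {P : Type*} {C : P → Type*} {K : ℕ} {a : ℕ → ∀ q, C q}
    [∀ p, DecidableEq (C p)]
    (hend : a K = a 0) (p : P) (v0 v1 : C p) (hv : v0 ≠ v1)
    (hdir : ∀ t < K, a (t+1) p ≠ a t p → a t p = v0 ∧ a (t+1) p = v1) :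
    ∀ t < K, a (t+1) p = a t p := by
  set m : ℕ → ℕ := fun t => if a t p = v1 then 1 else 0 with hm
  have hstep : ∀ t < K, m t ≤ m (t+1) := by
    intro t ht
    by_cases h : a (t+1) p = a t p
    · simp [hm, h]
    · obtain ⟨h0, h1⟩ := hdir t ht h
      have : m t = 0 := by simp [hm, h0, hv]
      omega
  have hKm : m K = m 0 := by simp [hm, hend]
  have hconst : ∀ t ≤ K, m t = m 0 := by
    intro t ht
    have h1 := monoBetween hstep t ht 0 (Nat.zero_le _)
    have h2 := monoBetween hstep K le_rfl t ht
    omega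
  intro t ht
  by_contra h
  obtain ⟨h0, h1⟩ := hdir t ht h
  have e1 : m t = 0 := by simp [hm, h0, hv]
  have e2 : m (t+1) = 1 := by simp [hm, h1]
  have := hconst t (by omega)
  have := hconst (t+1) (by omega)
  omega

lemma cycleConst {P : Type*} {C : P → Type*} {K : ℕ} {a : ℕ → ∀ q, C q}
    (p : P) (hnm : ∀ t < K, a (t+1) p = a t p) : ∀ t ≤ K, a t p = a 0 p := by
  intro t ht
  induction t with
  | zero => rfl
  | succ k ih => rw [hnm k (by omega)]; exact ih (by omega)

def cycProf {n : ℕ} (b : Fin n → Bool) (r s : Fin 2) : ∀ q, Act15 n q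
  | Sum.inl i => b i
  | Sum.inr j => if j = 0 then r else s

@[simp] lemma cycProf_inl {n : ℕ} (b : Fin n → Bool) (r s : Fin 2) (i : Fin n) :
    cycProf b r s (Sum.inl i) = b i := rfl

@[simp] lemma cycProf_inr0 {n : ℕ} (b : Fin n → Bool) (r s : Fin 2) :
    cycProf b r s (Sum.inr 0) = r := rfl

@[simp] lemma cycProf_inr1 {n : ℕ} (b : Fin n → Bool) (r s : Fin 2) :
    cycProf b r s (Sum.inr 1) = s := rfl

theorem stmt_15 (n : ℕ) (hn : 1 ≤ n) (x y : (Fin n → Bool) → ℝ)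
    (hx : ∀ a, x a = 0 ∨ x a = 2) (hy : ∀ a, y a = 0 ∨ y a = 2) :
    HasBetterReplyCycle (game15 x y) ↔ ∃ a : Fin n → Bool, x a = 2 ∧ y a = 2 := by
  constructor
  · rintro ⟨K, a, hK1, hend, hstep⟩
    have mk_dir : ∀ (p : Fin n ⊕ Fin 2) (v0 v1 : Act15 n p),
        (∀ t < K, (∀ q, q ≠ p → a (t+1) q = a t q) → a (t+1) p ≠ a t p →
          game15 x y p (a t) < game15 x y p (a (t+1)) → a t p = v0 ∧ a (t+1) p = v1) →
        ∀ t < K, a (t+1) p ≠ a t p → a t p = v0 ∧ a (t+1) p = v1 := by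
      intro p v0 v1 h t ht hne
      obtain ⟨q, hq1, hq2, hq3⟩ := hstep t ht
      by_cases hpq : p = q
      · subst hpq; exact h t ht hq2 hne hq3
      · exact absurd (hq2 p hpq) hne
    have hnml : ∀ i : Fin n, ∀ t < K, a (t+1) (Sum.inl i) = a t (Sum.inl i) := by
      intro i
      refine cycleNoMove hend (Sum.inl i) false true (by simp) (mk_dir _ _ _ ?_)
      intro t ht hsame hne hlt
      rw [game15_inl, game15_inl] at hlt
      cases h0 : a t (Sum.inl i) <;> cases h1 : a (t+1) (Sum.inl i) <;>
        rw [h0, h1] at hlt <;> norm_num at hlt <;> exact ⟨rfl, rfl⟩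
    have hconstl : ∀ t ≤ K, (fun i => a t (Sum.inl i)) = (fun i => a 0 (Sum.inl i)) := by
      intro t ht
      funext i
      exact cycleConst (Sum.inl i) (hnml i) t ht
    set b : Fin n → Bool := fun i => a 0 (Sum.inl i) with hb
    -- reduced inequality for player `inr 0`
    have redA : ∀ t < K, (∀ q, q ≠ (Sum.inr 0 : Fin n ⊕ Fin 2) → a (t+1) q = a t q) →
        game15 x y (Sum.inr 0) (a t) < game15 x y (Sum.inr 0) (a (t+1)) →
        gadgetA (a t (Sum.inr 0)) (a t (Sum.inr 1)) (x b)
          < gadgetA (a (t+1) (Sum.inr 0)) (a t (Sum.inr 1)) (x b) := by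
      intro t ht hsame hlt
      rw [game15_inr0, game15_inr0, hconstl t (by omega), hconstl (t+1) (by omega),
        hsame (Sum.inr 1) (by simp)] at hlt
      exact hlt
    have redB : ∀ t < K, (∀ q, q ≠ (Sum.inr 1 : Fin n ⊕ Fin 2) → a (t+1) q = a t q) →
        game15 x y (Sum.inr 1) (a t) < game15 x y (Sum.inr 1) (a (t+1)) →
        gadgetB (a t (Sum.inr 0)) (a t (Sum.inr 1)) (y b)
          < gadgetB (a t (Sum.inr 0)) (a (t+1) (Sum.inr 1)) (y b) := by
      intro t ht hsame hlt
      rw [game15_inr1, game15_inr1, hconstl t (by omega), hconstl (t+1) (by omega),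
        hsame (Sum.inr 0) (by simp)] at hlt
      exact hlt
    have finish : (∀ t < K, a (t+1) (Sum.inr 0) = a t (Sum.inr 0)) →
        (∀ t < K, a (t+1) (Sum.inr 1) = a t (Sum.inr 1)) → False := by
      intro hnmA hnmB
      obtain ⟨q, hq1, hq2, hq3⟩ := hstep 0 (by omega)
      rcases q with i | j
      · exact hq1 (hnml i 0 (by omega))
      · rcases fin2cases j with hj | hj <;> subst hj
        · exact hq1 (hnmA 0 (by omega))
        · exact hq1 (hnmB 0 (by omega))
    refine ⟨b, ?_, ?_⟩
    · -- x b = 2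
      rcases hx b with hx0 | hx2
      · exfalso
        have hx0' : ¬ x b = 2 := by rw [hx0]; norm_num
        have hnmA : ∀ t < K, a (t+1) (Sum.inr 0) = a t (Sum.inr 0) := by
          refine cycleNoMove hend (Sum.inr 0) 1 0 (show (1:Fin 2) ≠ 0 by decide) (mk_dir _ _ _ ?_)
          intro t ht hsame hne hlt
          rcases gadgetA_dir (x b) (hx b) (redA t ht hsame hlt) with ⟨_, h1, h2⟩ | ⟨_, h1, h2⟩
          · exact ⟨h1, h2⟩
          · rw [if_neg hx0'] at h1 h2; exact ⟨h1, h2⟩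
        have hcA := cycleConst (Sum.inr 0) hnmA
        have keyB : ∀ t < K, a (t+1) (Sum.inr 1) ≠ a t (Sum.inr 1) →
            (a 0 (Sum.inr 0) = 0 ∧ a t (Sum.inr 1) = 0 ∧ a (t+1) (Sum.inr 1) = 1) ∨
            (a 0 (Sum.inr 0) = 1 ∧ a t (Sum.inr 1) = (if y b = 2 then 1 else 0) ∧
              a (t+1) (Sum.inr 1) = (if y b = 2 then 0 else 1)) := by
          intro t ht hne
          obtain ⟨q, hq1, hq2, hq3⟩ := hstep t ht
          by_cases hpq : (Sum.inr 1 : Fin n ⊕ Fin 2) = q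
          · subst hpq
            rcases gadgetB_dir (y b) (hy b) (redB t ht hq2 hq3) with ⟨h0, h1, h2⟩ | ⟨h0, h1, h2⟩
            · exact Or.inl ⟨by rw [← hcA t (by omega)]; exact h0, h1, h2⟩
            · exact Or.inr ⟨by rw [← hcA t (by omega)]; exact h0, h1, h2⟩
          · exact absurd (hq2 _ hpq) hne
        have hnmB : ∀ t < K, a (t+1) (Sum.inr 1) = a t (Sum.inr 1) := by
          rcases fin2cases (a 0 (Sum.inr 0)) with hr0 | hr0
          · refine cycleNoMove hend (Sum.inr 1) 0 1 (show (0:Fin 2) ≠ 1 by decide) ?_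
            intro t ht hne
            rcases keyB t ht hne with ⟨_, h1, h2⟩ | ⟨h0, _, _⟩
            · exact ⟨h1, h2⟩
            · rw [hr0] at h0; exact absurd (show (0:Fin 2) = 1 from h0) (by decide)
          · by_cases hy2 : y b = 2
            · refine cycleNoMove hend (Sum.inr 1) 1 0 (show (1:Fin 2) ≠ 0 by decide) ?_
              intro t ht hne
              rcases keyB t ht hne with ⟨h0, _, _⟩ | ⟨_, h1, h2⟩
              · rw [hr0] at h0; exact absurd (show (1:Fin 2) = 0 from h0) (by decide)
              · rw [if_pos hy2] at h1 h2; exact ⟨h1, h2⟩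
            · refine cycleNoMove hend (Sum.inr 1) 0 1 (show (0:Fin 2) ≠ 1 by decide) ?_
              intro t ht hne
              rcases keyB t ht hne with ⟨h0, _, _⟩ | ⟨_, h1, h2⟩
              · rw [hr0] at h0; exact absurd (show (1:Fin 2) = 0 from h0) (by decide)
              · rw [if_neg hy2] at h1 h2; exact ⟨h1, h2⟩
        exact finish hnmA hnmB
      · exact hx2
    · -- y b = 2
      rcases hy b with hy0 | hy2
      · exfalso
        have hy0' : ¬ y b = 2 := by rw [hy0]; norm_num
        have hnmB : ∀ t < K, a (t+1) (Sum.inr 1) = a t (Sum.inr 1) := by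
          refine cycleNoMove hend (Sum.inr 1) 0 1 (show (0:Fin 2) ≠ 1 by decide) (mk_dir _ _ _ ?_)
          intro t ht hsame hne hlt
          rcases gadgetB_dir (y b) (hy b) (redB t ht hsame hlt) with ⟨_, h1, h2⟩ | ⟨_, h1, h2⟩
          · exact ⟨h1, h2⟩
          · rw [if_neg hy0'] at h1 h2; exact ⟨h1, h2⟩
        have hcB := cycleConst (Sum.inr 1) hnmB
        have keyA : ∀ t < K, a (t+1) (Sum.inr 0) ≠ a t (Sum.inr 0) →
            (a 0 (Sum.inr 1) = 0 ∧ a t (Sum.inr 0) = 1 ∧ a (t+1) (Sum.inr 0) = 0) ∨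
            (a 0 (Sum.inr 1) = 1 ∧ a t (Sum.inr 0) = (if x b = 2 then 0 else 1) ∧
              a (t+1) (Sum.inr 0) = (if x b = 2 then 1 else 0)) := by
          intro t ht hne
          obtain ⟨q, hq1, hq2, hq3⟩ := hstep t ht
          by_cases hpq : (Sum.inr 0 : Fin n ⊕ Fin 2) = q
          · subst hpq
            rcases gadgetA_dir (x b) (hx b) (redA t ht hq2 hq3) with ⟨h0, h1, h2⟩ | ⟨h0, h1, h2⟩
            · exact Or.inl ⟨by rw [← hcB t (by omega)]; exact h0, h1, h2⟩
            · exact Or.inr ⟨by rw [← hcB t (by omega)]; exact h0, h1, h2⟩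
          · exact absurd (hq2 _ hpq) hne
        have hnmA : ∀ t < K, a (t+1) (Sum.inr 0) = a t (Sum.inr 0) := by
          rcases fin2cases (a 0 (Sum.inr 1)) with hs0 | hs0
          · refine cycleNoMove hend (Sum.inr 0) 1 0 (show (1:Fin 2) ≠ 0 by decide) ?_
            intro t ht hne
            rcases keyA t ht hne with ⟨_, h1, h2⟩ | ⟨h0, _, _⟩
            · exact ⟨h1, h2⟩
            · rw [hs0] at h0; exact absurd (show (0:Fin 2) = 1 from h0) (by decide)
          · by_cases hx2 : x b = 2
            · refine cycleNoMove hend (Sum.inr 0) 0 1 (show (0:Fin 2) ≠ 1 by decide) ?_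
              intro t ht hne
              rcases keyA t ht hne with ⟨h0, _, _⟩ | ⟨_, h1, h2⟩
              · rw [hs0] at h0; exact absurd (show (1:Fin 2) = 0 from h0) (by decide)
              · rw [if_pos hx2] at h1 h2; exact ⟨h1, h2⟩
            · refine cycleNoMove hend (Sum.inr 0) 1 0 (show (1:Fin 2) ≠ 0 by decide) ?_
              intro t ht hne
              rcases keyA t ht hne with ⟨h0, _, _⟩ | ⟨_, h1, h2⟩
              · rw [hs0] at h0; exact absurd (show (1:Fin 2) = 0 from h0) (by decide)
              · rw [if_neg hx2] at h1 h2; exact ⟨h1, h2⟩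
        exact finish hnmA hnmB
      · exact hy2
  · rintro ⟨b, hxb, hyb⟩
    refine ⟨4, fun t => cycProf b (if t = 2 ∨ t = 3 then 1 else 0)
      (if t = 1 ∨ t = 2 then 1 else 0), by omega, by norm_num, ?_⟩
    have hsame1 : ∀ (r s s' : Fin 2), ∀ q, q ≠ (Sum.inr 1 : Fin n ⊕ Fin 2) →
        cycProf b r s' q = cycProf b r s q := by
      rintro r s s' (i | j) hq
      · rfl
      · rcases fin2cases j with hj | hj
        · subst hj; rfl
        · subst hj; exact absurd rfl hq
    have hsame0 : ∀ (r r' s : Fin 2), ∀ q, q ≠ (Sum.inr 0 : Fin n ⊕ Fin 2) →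
        cycProf b r' s q = cycProf b r s q := by
      rintro r r' s (i | j) hq
      · rfl
      · rcases fin2cases j with hj | hj
        · subst hj; exact absurd rfl hq
        · subst hj; rfl
    have harg : ∀ r s : Fin 2, (fun i => cycProf b r s (Sum.inl i)) = b := fun _ _ => rfl
    have mkstep : ∀ (r s r' s' : Fin 2) (p : Fin n ⊕ Fin 2),
        cycProf b r' s' p ≠ cycProf b r s p →
        (∀ q, q ≠ p → cycProf b r' s' q = cycProf b r s q) →
        game15 x y p (cycProf b r s) < game15 x y p (cycProf b r' s') →
        ∃ p : Fin n ⊕ Fin 2, cycProf b r' s' p ≠ cycProf b r s p ∧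
          (∀ q, q ≠ p → cycProf b r' s' q = cycProf b r s q) ∧
          game15 x y p (cycProf b r s) < game15 x y p (cycProf b r' s') :=
      fun r s r' s' p h1 h2 h3 => ⟨p, h1, h2, h3⟩
    intro t ht
    interval_cases t
    · exact mkstep 0 0 0 1 (Sum.inr 1) (show (1:Fin 2) ≠ 0 by decide) (hsame1 0 0 1)
        (by rw [game15_inr1, game15_inr1, cycProf_inr0, cycProf_inr0, cycProf_inr1,
              cycProf_inr1, harg, harg, gadgetB00, gadgetB01]; norm_num)
    · exact mkstep 0 1 1 1 (Sum.inr 0) (show (1:Fin 2) ≠ 0 by decide) (hsame0 0 1 1)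
        (by rw [game15_inr0, game15_inr0, cycProf_inr0, cycProf_inr0, cycProf_inr1,
              cycProf_inr1, harg, harg, gadgetA01, gadgetA11, hxb]; norm_num)
    · exact mkstep 1 1 1 0 (Sum.inr 1) (show (0:Fin 2) ≠ 1 by decide) (hsame1 1 1 0)
        (by rw [game15_inr1, game15_inr1, cycProf_inr0, cycProf_inr0, cycProf_inr1,
              cycProf_inr1, harg, harg, gadgetB11, gadgetB10, hyb]; norm_num)
    · exact mkstep 1 0 0 0 (Sum.inr 0) (show (0:Fin 2) ≠ 1 by decide) (hsame0 1 0 0)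
        (by rw [game15_inr0, game15_inr0, cycProf_inr0, cycProf_inr0, cycProf_inr1,
              cycProf_inr1, harg, harg, gadgetA10, gadgetA00]; norm_num)
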